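/- Let ℒ be a class of linear orders downward closed under embeddability, and let L, L', M be linear orders with M ∉ ℒ (up to isomorphism). If L·M ⊴^ℒ L', then L convexly embeds into L'. -/

import Mathlib

universe u v w x

/-- A `K`-convex partition of `L`: a partition of `L` into nonempty pieces indexed by `K`
such that `k < k'` iff every element of `P k` is below every element of `P k'`. -/
def IsConvexPartition {K : Type u} {L : Type v} [LinearOrder K] [LinearOrder L]
    (P : K → Set L) : Prop :=
  (∀ k, (P k).Nonempty) ∧ (∀ y : L, ∃! k, y ∈ P k) ∧
    ∀ k k' : K, k < k' ↔ ∀ a ∈ P k, ∀ b ∈ P k', a < b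

/-- `ℒ`-convex embeddability: `L ⊴^ℒ L'` iff there are `K ∈ ℒ`, a `K`-convex partition of `L`,
and an order embedding of `L` into `L'` mapping each piece onto a convex set. -/
def LCE (ℒ : Set LinOrd.{u}) (L : Type v) (L' : Type w)
    [LinearOrder L] [LinearOrder L'] : Prop :=
  ∃ K ∈ ℒ, ∃ P : ↥K → Set L, IsConvexPartition P ∧
    ∃ f : L ↪o L', ∀ k : ↥K, (⇑f '' P k).OrdConnected

/-- If `M ∉ ℒ` (up to isomorphism) and `L·M ⊴^ℒ L'`, then `L` convexly embeds into `L'`. -/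
theorem stmt_8 (ℒ : Set LinOrd.{u})
    (hdc : ∀ A ∈ ℒ, ∀ B : LinOrd.{u}, Nonempty ↥B → Nonempty (↥B ↪o ↥A) → B ∈ ℒ)
    {L : Type v} {L' : Type w} {M : Type x}
    [LinearOrder L] [LinearOrder L'] [LinearOrder M] [Nonempty M]
    (hM : ¬ ∃ A ∈ ℒ, Nonempty (↥A ≃o M))
    (h : LCE ℒ (M ×ₗ L) L') :
    ∃ f : L ↪o L', (Set.range ⇑f).OrdConnected := by
  by_cases hL : Nonempty L
  swap
  · have : IsEmpty L := not_nonempty_iff.mp hL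
    refine ⟨⟨⟨isEmptyElim, fun a => isEmptyElim a⟩, fun {a} => isEmptyElim a⟩, ?_⟩
    have : Set.range (fun a : L => (isEmptyElim a : L')) = ∅ := Set.range_eq_empty _
    rw [show (⇑(⟨⟨isEmptyElim, fun a => isEmptyElim a⟩, fun {a} => isEmptyElim a⟩ : L ↪o L')
        : L → L') = isEmptyElim from rfl]
    simpa [this] using Set.ordConnected_empty
  obtain ⟨l₀⟩ := hL
  obtain ⟨K, hK, P, ⟨hne, huniq, hord⟩, f, hconv⟩ := h
  by_cases hcase : ∃ m : M, ∃ k : ↥K, ∀ l : L, (toLex (m, l)) ∈ P k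
  · obtain ⟨m, k, hk⟩ := hcase
    have hsm : StrictMono (fun l : L => f (toLex (m, l))) := by
      intro a b hab
      exact f.strictMono (Prod.Lex.lt_iff.mpr (Or.inr ⟨rfl, hab⟩))
    refine ⟨OrderEmbedding.ofStrictMono _ hsm, ⟨?_⟩⟩
    rintro x ⟨a, rfl⟩ y ⟨b, rfl⟩ z hz
    have hx : f (toLex (m, a)) ∈ ⇑f '' P k := ⟨_, hk a, rfl⟩
    have hy : f (toLex (m, b)) ∈ ⇑f '' P k := ⟨_, hk b, rfl⟩
    obtain ⟨w, hw, hwz⟩ := (hconv k).out hx hy hz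
    have h1 : toLex (m, a) ≤ w := f.le_iff_le.mp (hwz ▸ hz.1)
    have h2 : w ≤ toLex (m, b) := f.le_iff_le.mp (hwz ▸ hz.2)
    have e1 := Prod.Lex.le_iff.mp h1
    have e2 := Prod.Lex.le_iff.mp h2
    have hle1 : m ≤ (ofLex w).1 := by
      rcases e1 with h' | ⟨h', _⟩
      · exact h'.le
      · exact le_of_eq h'
    have hle2 : (ofLex w).1 ≤ m := by
      rcases e2 with h' | ⟨h', _⟩
      · exact h'.le
      · exact le_of_eq h'
    have hm : (ofLex w).1 = m := le_antisymm hle2 hle1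
    refine ⟨(ofLex w).2, ?_⟩
    have hww : toLex (m, (ofLex w).2) = w := by rw [← hm]; rfl
    show f (toLex (m, (ofLex w).2)) = z
    rw [hww, hwz]
  · exfalso
    push_neg at hcase
    have H : ∀ m : M, ∃ k k' : ↥K, ∃ a b : L,
        k < k' ∧ toLex (m, a) ∈ P k ∧ toLex (m, b) ∈ P k' := by
      intro m
      obtain ⟨k₀, hk₀, -⟩ := huniq (toLex (m, l₀))
      obtain ⟨l, hl⟩ := hcase m k₀
      obtain ⟨k₁, hk₁, -⟩ := huniq (toLex (m, l))
      have hne' : k₁ ≠ k₀ := fun e => hl (e ▸ hk₁)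
      rcases hne'.lt_or_gt with h' | h'
      · exact ⟨k₁, k₀, l, l₀, h', hk₁, hk₀⟩
      · exact ⟨k₀, k₁, l₀, l, h', hk₀, hk₁⟩
    choose lo hi a b hlt hlo hhi using H
    have hg : StrictMono hi := by
      intro m m' hmm'
      have h1 : hi m ≤ lo m' := by
        by_contra h'
        push_neg at h'
        have := (hord (lo m') (hi m)).mp h' _ (hlo m') _ (hhi m)
        exact absurd (Prod.Lex.lt_iff.mpr (Or.inl hmm' :
          (toLex (m, b m) : M ×ₗ L).1 < m' ∨ _)) (asymm this)
      exact lt_of_le_of_lt h1 (hlt m')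
    set g := OrderEmbedding.ofStrictMono hi hg
    refine hM ⟨LinOrd.of (Set.range hi), ?_, ⟨(hg.orderIso hi).symm⟩⟩
    exact hdc K hK _ ⟨_, Classical.arbitrary M, rfl⟩ ⟨OrderEmbedding.subtype _⟩
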